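/- For the degree-4 octahedral Painlevé VI solution given parametrically by y = (s−1)²/(s(s−2)) and t = (s+1)(s−1)³/(s³(s−2)), the function y(t) satisfies the Painlevé VI equation with parameters corresponding to θ = (1/4, 1/4, 1/4, 1/4), i.e. α = 9/32, β = −1/32, γ = 1/32, δ = 15/32. -/

import Mathlib

/-- The Painlevé VI equation, as a relation between `t`, `y = y(t)`, `yp = y'(t)` and
`ypp = y''(t)`, with parameters `α β γ δ`. -/
def PVI (α β γ δ t y yp ypp : ℝ) : Prop :=
  ypp = (1/2) * (1/y + 1/(y-1) + 1/(y-t)) * yp^2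
        - (1/t + 1/(t-1) + 1/(y-t)) * yp
        + (y*(y-1)*(y-t) / (t^2*(t-1)^2)) *
            (α + β*t/y^2 + γ*(t-1)/(y-1)^2 + δ*t*(t-1)/(y-t)^2)

private lemma hdY (x : ℝ) (h0 : x ≠ 0) (h2 : x - 2 ≠ 0) :
    deriv (fun s : ℝ => (s-1)^2 / (s*(s-2))) x = (2-2*x)/(x^2*(x-2)^2) := by
  have hn : HasDerivAt (fun s : ℝ => (s-1)^2) (2*(x-1)) x := by
    simpa using ((hasDerivAt_id x).sub_const 1).fun_pow 2
  have hd : HasDerivAt (fun s : ℝ => s*(s-2)) (2*x-2) x := by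
    have h := (hasDerivAt_id x).fun_mul ((hasDerivAt_id x).sub_const 2)
    convert h using 1
    all_goals try rfl
    simp only [id]
    ring
  have hne : x*(x-2) ≠ 0 := mul_ne_zero h0 h2
  have := (hn.fun_div hd hne).deriv
  rw [this]
  field_simp
  ring

private lemma hdT (x : ℝ) (h0 : x ≠ 0) (h2 : x - 2 ≠ 0) :
    deriv (fun s : ℝ => (s+1)*(s-1)^3 / (s^3*(s-2))) x
      = (-6*(x-1)^2)/(x^4*(x-2)^2) := by
  have hn : HasDerivAt (fun s : ℝ => (s+1)*(s-1)^3)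
      ((x-1)^3 + (x+1)*(3*(x-1)^2)) x := by
    have h1 : HasDerivAt (fun s : ℝ => s+1) 1 x := (hasDerivAt_id x).add_const 1
    have h2 : HasDerivAt (fun s : ℝ => (s-1)^3) (3*(x-1)^2) x := by
      simpa using ((hasDerivAt_id x).sub_const 1).fun_pow 3
    simpa using h1.fun_mul h2
  have hd : HasDerivAt (fun s : ℝ => s^3*(s-2)) (3*x^2*(x-2) + x^3) x := by
    have h1 : HasDerivAt (fun s : ℝ => s^3) (3*x^2) x := by
      simpa using (hasDerivAt_id x).fun_pow 3
    have h2 : HasDerivAt (fun s : ℝ => s-2) 1 x := (hasDerivAt_id x).sub_const 2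
    simpa using h1.fun_mul h2
  have hne : x^3*(x-2) ≠ 0 := mul_ne_zero (pow_ne_zero 3 h0) h2
  have := (hn.fun_div hd hne).deriv
  rw [this]
  field_simp
  ring

private lemma ratio (x : ℝ) (h0 : x ≠ 0) (h2 : x - 2 ≠ 0) :
    deriv (fun s : ℝ => (s-1)^2 / (s*(s-2))) x
      / deriv (fun s : ℝ => (s+1)*(s-1)^3 / (s^3*(s-2))) x
      = x^2/(3*(x-1)) := by
  rw [hdY x h0 h2, hdT x h0 h2]
  rcases eq_or_ne x 1 with h1 | h1
  · subst h1; norm_num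
  · have h1' : x - 1 ≠ 0 := sub_ne_zero.mpr h1
    field_simp
    ring

set_option maxHeartbeats 1000000 in
/-- The degree-4 octahedral algebraic Painlevé VI solution:
`y = (s−1)²/(s(s−2))`, `t = (s+1)(s−1)³/(s³(s−2))` satisfies Painlevé VI with
`θ = (1/4,1/4,1/4,1/4)`, i.e. `α = 9/32`, `β = −1/32`, `γ = 1/32`, `δ = 15/32`,
where `y' = (dy/ds)/(dt/ds)` etc. -/
theorem octahedral_degree4_solves_PVI :
    ∀ s : ℝ,
      let Y : ℝ → ℝ := fun s => (s-1)^2 / (s*(s-2))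
      let T : ℝ → ℝ := fun s => (s+1)*(s-1)^3 / (s^3*(s-2))
      s ≠ 0 → s ≠ 2 → deriv T s ≠ 0 →
      T s ≠ 0 → T s ≠ 1 → Y s ≠ 0 → Y s ≠ 1 → Y s ≠ T s →
      PVI (9/32) (-1/32) (1/32) (15/32)
        (T s) (Y s) (deriv Y s / deriv T s)
        (deriv (fun x => deriv Y x / deriv T x) s / deriv T s) := by
  intro s Y T hs0 hs2' hdTne hT0 hT1 hY0 _ _
  have hs2 : s - 2 ≠ 0 := sub_ne_zero.mpr hs2'
  -- s ≠ 1
  have hs1 : s - 1 ≠ 0 := by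
    intro h
    apply hdTne
    show deriv (fun x : ℝ => (x+1)*(x-1)^3 / (x^3*(x-2))) s = 0
    rw [hdT s hs0 hs2, h]
    norm_num
  -- s + 1 ≠ 0
  have hp1 : s + 1 ≠ 0 := by
    intro h
    apply hT0
    show (s+1)*(s-1)^3 / (s^3*(s-2)) = 0
    rw [h]; ring
  -- 2s - 1 ≠ 0
  have h2s1 : 2*s - 1 ≠ 0 := by
    intro h
    apply hT1
    show (s+1)*(s-1)^3 / (s^3*(s-2)) = 1
    have hs : s = 1/2 := by linarith
    subst hs; norm_num
  -- first derivatives at s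
  have hYs : deriv Y s = (2-2*s)/(s^2*(s-2)^2) := hdY s hs0 hs2
  have hTs : deriv T s = (-6*(s-1)^2)/(s^4*(s-2)^2) := hdT s hs0 hs2
  -- second derivative
  have hev : (fun x => deriv Y x / deriv T x) =ᶠ[nhds s]
      (fun x => x^2/(3*(x-1))) := by
    filter_upwards [eventually_ne_nhds hs0, eventually_ne_nhds hs2'] with x h0 h2
    exact ratio x h0 (sub_ne_zero.mpr h2)
  have hG : HasDerivAt (fun x : ℝ => x^2/(3*(x-1)))
      ((s^2-2*s)/(3*(s-1)^2)) s := by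
    have hn : HasDerivAt (fun x : ℝ => x^2) (2*s) s := by
      simpa using (hasDerivAt_id s).fun_pow 2
    have hd : HasDerivAt (fun x : ℝ => 3*(x-1)) 3 s := by
      simpa using ((hasDerivAt_id s).sub_const 1).const_mul 3
    have hne : 3*(s-1) ≠ 0 := mul_ne_zero three_ne_zero hs1
    have := hn.fun_div hd hne
    convert this using 1
    all_goals try rfl
    field_simp
    ring
  have hsnd : deriv (fun x => deriv Y x / deriv T x) s
      = (s^2-2*s)/(3*(s-1)^2) := by
    rw [hev.deriv_eq]; exact hG.deriv
  -- finish
  show PVI (9/32) (-1/32) (1/32) (15/32)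
    ((s+1)*(s-1)^3 / (s^3*(s-2))) ((s-1)^2 / (s*(s-2)))
    (deriv Y s / deriv T s)
    (deriv (fun x => deriv Y x / deriv T x) s / deriv T s)
  rw [hsnd, hYs, hTs, PVI]
  have hYT : (s-1)^2 / (s*(s-2)) - (s+1)*(s-1)^3 / (s^3*(s-2))
      = (s-1)^2/(s^3*(s-2)) := by field_simp; ring
  have hYm1 : (s-1)^2 / (s*(s-2)) - 1 = 1/(s*(s-2)) := by field_simp; ring
  have hTm1 : (s+1)*(s-1)^3 / (s^3*(s-2)) - 1 = (2*s-1)/(s^3*(s-2)) := by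
    field_simp; ring
  rw [hYT, hYm1, hTm1]
  have h2s1' : s * 2 - 1 ≠ 0 := by rwa [mul_comm]
  field_simp
  ring
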